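/- Let I = {i₁ < i₂ < … < i_ℓ} be a nonempty finite set of positive integers. Define I_k = ({i₁,…,i_{k−1}, i_k−1, i_{k+1}−1, …, i_ℓ−1}) \ {0} and Î_k = {i₁,…,i_{k−1}, i_{k+1}−1, …, i_ℓ−1}, and let I' = {i_k ∈ I : i_k − 1 ∉ I}, I'' = I' \ {1}. Then for n > max(I), d(I;n+1) = d(I;n) + Σ_{i_k ∈ I''} d(I_k;n) + Σ_{i_k ∈ I'} d(Î_k;n). -/

import Mathlib

open Equiv Finset

/-- The descent set of a permutation of `Fin n`, with positions 1-indexed: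
`i ∈ descSet n π` iff `1 ≤ i ≤ n-1` and `π_i > π_{i+1}` (1-indexed entries). -/
def descSet (n : ℕ) (π : Equiv.Perm (Fin n)) : Finset ℕ :=
  (Finset.range n).filter fun i =>
    ∃ h : 0 < i ∧ i < n, π ⟨i, h.2⟩ < π ⟨i - 1, by omega⟩

/-- `dA I n` is the number of permutations in `S_n` with descent set exactly `I`. -/
def dA (I : Finset ℕ) (n : ℕ) : ℕ :=
  (Finset.univ.filter fun π : Equiv.Perm (Fin n) => descSet n π = I).card

lemma mem_descSet {n : ℕ} (π : Equiv.Perm (Fin n)) (i : ℕ) :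
    i ∈ descSet n π ↔ ∃ h : 0 < i ∧ i < n, π ⟨i, h.2⟩ < π ⟨i - 1, by omega⟩ := by
  simp only [descSet, Finset.mem_filter, Finset.mem_range]
  constructor
  · rintro ⟨_, h⟩; exact h
  · rintro ⟨h, hlt⟩; exact ⟨h.2, h, hlt⟩

def ins {n : ℕ} (p : Fin (n+1)) (σ : Equiv.Perm (Fin n)) : Equiv.Perm (Fin (n+1)) :=
  (finSuccEquiv' p).trans (σ.optionCongr.trans (finSuccEquiv' (Fin.last n)).symm)

lemma ins_apply_self {n : ℕ} (p : Fin (n+1)) (σ : Equiv.Perm (Fin n)) :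
    ins p σ p = Fin.last n := by
  simp [ins, finSuccEquiv'_at, finSuccEquiv'_symm_none]

lemma ins_apply_lt {n : ℕ} (p : Fin (n+1)) (σ : Equiv.Perm (Fin n)) (i : ℕ)
    (hi : i < n) (h : i < p.val) :
    ins p σ ⟨i, by omega⟩ = Fin.castSucc (σ ⟨i, hi⟩) := by
  show ins p σ (Fin.castSucc ⟨i, hi⟩) = _
  rw [ins]
  simp only [Equiv.trans_apply]
  rw [finSuccEquiv'_below (by simp only [Fin.lt_def, Fin.coe_castSucc]; exact h)]
  simp [finSuccEquiv'_symm_some, Fin.succAbove_last]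

lemma ins_apply_gt {n : ℕ} (p : Fin (n+1)) (σ : Equiv.Perm (Fin n)) (i : ℕ)
    (hi : i - 1 < n) (h0 : 0 < i) (h : p.val < i) (hi' : i < n + 1) :
    ins p σ ⟨i, hi'⟩ = Fin.castSucc (σ ⟨i - 1, hi⟩) := by
  have : (⟨i, hi'⟩ : Fin (n+1)) = Fin.succ ⟨i - 1, hi⟩ := by ext; simp; omega
  rw [this, ins]
  simp only [Equiv.trans_apply]
  rw [finSuccEquiv'_above (by simp only [Fin.le_def, Fin.coe_castSucc]; omega)]
  simp [finSuccEquiv'_symm_some, Fin.succAbove_last]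

lemma mem_descSet_ins {n : ℕ} (p : Fin (n+1)) (σ : Equiv.Perm (Fin n)) (i : ℕ) :
    i ∈ descSet (n+1) (ins p σ) ↔
      (i < p.val ∧ i ∈ descSet n σ) ∨ (i = p.val + 1 ∧ 0 < i ∧ i < n + 1) ∨
      (p.val + 1 < i ∧ i < n + 1 ∧ i - 1 ∈ descSet n σ) := by
  rw [mem_descSet]
  constructor
  · rintro ⟨⟨h0, h1⟩, hlt⟩
    rcases lt_trichotomy i p.val with hc | hc | hc
    · left
      refine ⟨hc, ?_⟩
      rw [ins_apply_lt p σ i (by omega) hc, ins_apply_lt p σ (i-1) (by omega) (by omega)] at hlt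
      rw [Fin.castSucc_lt_castSucc_iff] at hlt
      rw [mem_descSet]
      exact ⟨⟨h0, by omega⟩, hlt⟩
    · exfalso
      have hp : (⟨i, h1⟩ : Fin (n+1)) = p := by ext; simp [hc]
      rw [hp, ins_apply_self, ins_apply_lt p σ (i-1) (by omega) (by omega)] at hlt
      exact absurd hlt (by simp [Fin.castSucc_lt_last, not_lt, Fin.le_last])
    · rcases eq_or_lt_of_le (Nat.succ_le_of_lt hc) with hc2 | hc2
      · exact Or.inr (Or.inl ⟨hc2.symm, h0, h1⟩)
      · right; right
        refine ⟨hc2, h1, ?_⟩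
        rw [ins_apply_gt p σ i (by omega) h0 hc h1,
            ins_apply_gt p σ (i-1) (by omega) (by omega) (by omega) (by omega)] at hlt
        rw [Fin.castSucc_lt_castSucc_iff] at hlt
        rw [mem_descSet]
        exact ⟨⟨by omega, by omega⟩, hlt⟩
  · rintro (⟨hc, hd⟩ | ⟨hc, h0, h1⟩ | ⟨hc, h1, hd⟩)
    · rw [mem_descSet] at hd
      obtain ⟨⟨h0, h1⟩, hlt⟩ := hd
      refine ⟨⟨h0, by omega⟩, ?_⟩
      rw [ins_apply_lt p σ i h1 hc, ins_apply_lt p σ (i-1) (by omega) (by omega)]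
      rw [Fin.castSucc_lt_castSucc_iff]
      exact hlt
    · refine ⟨⟨h0, h1⟩, ?_⟩
      have hp : (⟨i - 1, by omega⟩ : Fin (n+1)) = p := by ext; simp; omega
      rw [hp, ins_apply_self, ins_apply_gt p σ i (by omega) h0 (by omega) h1]
      exact Fin.castSucc_lt_last _
    · rw [mem_descSet] at hd
      obtain ⟨⟨g0, g1⟩, hlt⟩ := hd
      refine ⟨⟨by omega, h1⟩, ?_⟩
      rw [ins_apply_gt p σ i (by omega) (by omega) (by omega) h1,
          ins_apply_gt p σ (i-1) (by omega) (by omega) (by omega) (by omega)]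
      rw [Fin.castSucc_lt_castSucc_iff]
      exact hlt

lemma optionCongr_removeNone' {α β : Type*} (e : Option α ≃ Option β) (h : e none = none) :
    (Equiv.removeNone e).optionCongr = e := by
  refine Equiv.ext fun x => ?_
  cases x with
  | none => simp [h]
  | some a =>
    have hx : ∃ b, e (some a) = some b := by
      cases hx : e (some a) with
      | none => exact absurd (e.injective (hx.trans h.symm)) (by simp)
      | some b => exact ⟨b, rfl⟩
    simpa using Equiv.removeNone_some e hx

def del {n : ℕ} (p : Fin (n+1)) (π : Equiv.Perm (Fin (n+1))) : Equiv.Perm (Fin n) :=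
  Equiv.removeNone ((finSuccEquiv' p).symm.trans (π.trans (finSuccEquiv' (Fin.last n))))

lemma del_ins {n : ℕ} (p : Fin (n+1)) (σ : Equiv.Perm (Fin n)) : del p (ins p σ) = σ := by
  have : (finSuccEquiv' p).symm.trans ((ins p σ).trans (finSuccEquiv' (Fin.last n)))
      = σ.optionCongr := by
    ext x
    simp [ins]
  rw [del, this, Equiv.removeNone_optionCongr]

lemma ins_del {n : ℕ} (p : Fin (n+1)) (π : Equiv.Perm (Fin (n+1))) (h : π p = Fin.last n) :
    ins p (del p π) = π := by
  have hE : ((finSuccEquiv' p).symm.trans (π.trans (finSuccEquiv' (Fin.last n)))) none = none := by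
    simp [finSuccEquiv'_symm_none, h, finSuccEquiv'_at]
  rw [ins, del, optionCongr_removeNone' _ hE]
  ext x
  simp

lemma fiber_card {n : ℕ} (I : Finset ℕ) (p : Fin (n+1)) :
    ((Finset.univ.filter fun π : Equiv.Perm (Fin (n+1)) => descSet (n+1) π = I).filter
        fun π => π.symm (Fin.last n) = p).card
      = (Finset.univ.filter fun σ : Equiv.Perm (Fin n) =>
          descSet (n+1) (ins p σ) = I).card := by
  rw [Finset.filter_filter]
  refine Finset.card_bij' (fun π _ => del p π) (fun σ _ => ins p σ) ?_ ?_ ?_ ?_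
  · intro π hπ
    simp only [Finset.mem_filter, Finset.mem_univ, true_and] at hπ ⊢
    rw [ins_del p π (by rw [← hπ.2]; simp)]
    exact hπ.1
  · intro σ hσ
    simp only [Finset.mem_filter, Finset.mem_univ, true_and] at hσ ⊢
    refine ⟨hσ, ?_⟩
    rw [Equiv.symm_apply_eq, ins_apply_self]
  · intro π hπ
    simp only [Finset.mem_filter, Finset.mem_univ, true_and] at hπ
    exact ins_del p π (by rw [← hπ.2]; simp)
  · intro σ _
    exact del_ins p σ

lemma mem_D2 (I : Finset ℕ) (h0 : 0 ∉ I) (j m : ℕ) :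
    m ∈ (I.erase j).image (fun x => if x < j then x else x - 1) ↔
      (m < j ∧ m ∈ I) ∨ (j ≤ m ∧ m + 1 ∈ I) := by
  simp only [Finset.mem_image, Finset.mem_erase]
  constructor
  · rintro ⟨x, ⟨hxj, hxI⟩, rfl⟩
    have hx0 : x ≠ 0 := fun h => h0 (h ▸ hxI)
    by_cases hlt : x < j
    · simp only [if_pos hlt]
      exact Or.inl ⟨hlt, hxI⟩
    · right
      simp only [if_neg hlt]
      refine ⟨by omega, ?_⟩
      have hx : x - 1 + 1 = x := by omega
      rw [hx]; exact hxI
  · rintro (⟨h1, h2⟩ | ⟨h1, h2⟩)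
    · exact ⟨m, ⟨by omega, h2⟩, by simp [h1]⟩
    · exact ⟨m + 1, ⟨by omega, h2⟩, by rw [if_neg (by omega)]; omega⟩

lemma insert_D2 (I : Finset ℕ) (h0 : 0 ∉ I) {j : ℕ} (hj : j ∈ I) (h2 : 2 ≤ j) :
    insert (j-1) ((I.erase j).image (fun x => if x < j then x else x - 1))
      = (I.image fun x => if x < j then x else x - 1).erase 0 := by
  ext m
  simp only [Finset.mem_insert, mem_D2 I h0, Finset.mem_erase, Finset.mem_image]
  constructor
  · rintro (rfl | ⟨h1, h2'⟩ | ⟨h1, h2'⟩)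
    · exact ⟨by omega, j, hj, by rw [if_neg (by omega)]⟩
    · exact ⟨fun h => h0 (h ▸ h2'), m, h2', by rw [if_pos h1]⟩
    · exact ⟨by omega, m+1, h2', by rw [if_neg (by omega)]; omega⟩
  · rintro ⟨hm0, x, hxI, rfl⟩
    have hx0 : x ≠ 0 := fun h => h0 (h ▸ hxI)
    by_cases hlt : x < j
    · rw [if_pos hlt]; exact Or.inr (Or.inl ⟨hlt, hxI⟩)
    · rw [if_neg hlt]
      rcases eq_or_lt_of_le (not_lt.mp hlt) with h | h
      · exact Or.inl (by omega)
      · right; right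
        refine ⟨by omega, ?_⟩
        have hx : x - 1 + 1 = x := by omega
        rw [hx]; exact hxI

lemma des_ins_eq_iff {n : ℕ} (I : Finset ℕ) (h0 : 0 ∉ I) (hn : I.sup id < n)
    (p : Fin (n+1)) (σ : Equiv.Perm (Fin n)) :
    (descSet (n+1) (ins p σ) = I) ↔
      ((p.val = n ∧ descSet n σ = I) ∨
       (p.val < n ∧ p.val + 1 ∈ I ∧ p.val ∉ I ∧
         (descSet n σ = (I.erase (p.val+1)).image (fun x => if x < p.val+1 then x else x - 1) ∨
          (0 < p.val ∧ descSet n σ =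
            insert p.val ((I.erase (p.val+1)).image
              (fun x => if x < p.val+1 then x else x - 1)))))) := by
  have hIb : ∀ m ∈ I, 0 < m ∧ m < n := fun m hm =>
    ⟨Nat.pos_of_ne_zero (fun h => h0 (h ▸ hm)),
     lt_of_le_of_lt (Finset.le_sup (f := id) hm) hn⟩
  have hDb : ∀ m ∈ descSet n σ, 0 < m ∧ m < n := by
    intro m hm
    rw [mem_descSet] at hm
    obtain ⟨h, _⟩ := hm
    exact h
  set q := p.val with hqdef
  have hq : q ≤ n := by omega
  constructor
  · intro h
    have H' : ∀ i, ((i < q ∧ i ∈ descSet n σ) ∨ (i = q + 1 ∧ 0 < i ∧ i < n + 1) ∨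
        (q + 1 < i ∧ i < n + 1 ∧ i - 1 ∈ descSet n σ)) ↔ i ∈ I := fun i => by
      rw [← mem_descSet_ins, h]
    rcases eq_or_lt_of_le hq with hqn | hqn
    · left
      refine ⟨hqn, ?_⟩
      ext m
      constructor
      · intro hm
        obtain ⟨m0, mn⟩ := hDb m hm
        exact (H' m).mp (Or.inl ⟨by omega, hm⟩)
      · intro hm
        obtain ⟨m0, mn⟩ := hIb m hm
        rcases (H' m).mpr hm with ⟨_, hd⟩ | ⟨he, _⟩ | ⟨hgt, _, _⟩
        · exact hd
        · omega
        · omega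
    · have hj : q + 1 ∈ I := (H' (q+1)).mp (Or.inr (Or.inl ⟨rfl, by omega, by omega⟩))
      have hnq : q ∉ I := by
        intro hqI
        rcases (H' q).mpr hqI with ⟨hlt, _⟩ | ⟨he, _⟩ | ⟨hgt, _, _⟩ <;> omega
      refine Or.inr ⟨hqn, hj, hnq, ?_⟩
      by_cases hq0 : q ∈ descSet n σ
      · right
        refine ⟨(hDb q hq0).1, ?_⟩
        ext m
        rw [Finset.mem_insert, mem_D2 I h0]
        constructor
        · intro hm
          obtain ⟨m0, mn⟩ := hDb m hm
          rcases lt_trichotomy m q with hc | hc | hc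
          · exact Or.inr (Or.inl ⟨by omega, (H' m).mp (Or.inl ⟨hc, hm⟩)⟩)
          · exact Or.inl hc
          · exact Or.inr (Or.inr ⟨by omega,
              (H' (m+1)).mp (Or.inr (Or.inr ⟨by omega, by omega, hm⟩))⟩)
        · rintro (rfl | ⟨h1, h2⟩ | ⟨h1, h2⟩)
          · exact hq0
          · have hmq : m < q := by
              rcases eq_or_lt_of_le (Nat.lt_succ_iff.mp h1) with he | he
              · exact absurd (he ▸ h2) hnq
              · exact he
            rcases (H' m).mpr h2 with ⟨_, hd⟩ | ⟨he, _⟩ | ⟨hgt, _, _⟩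
            · exact hd
            · omega
            · omega
          · rcases (H' (m+1)).mpr h2 with ⟨hlt, _⟩ | ⟨he, _⟩ | ⟨_, _, hd⟩
            · omega
            · omega
            · exact hd
      · left
        ext m
        rw [mem_D2 I h0]
        constructor
        · intro hm
          obtain ⟨m0, mn⟩ := hDb m hm
          rcases lt_trichotomy m q with hc | hc | hc
          · exact Or.inl ⟨by omega, (H' m).mp (Or.inl ⟨hc, hm⟩)⟩
          · exact absurd (hc ▸ hm) hq0
          · exact Or.inr ⟨by omega,
              (H' (m+1)).mp (Or.inr (Or.inr ⟨by omega, by omega, hm⟩))⟩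
        · rintro (⟨h1, h2⟩ | ⟨h1, h2⟩)
          · have hmq : m < q := by
              rcases eq_or_lt_of_le (Nat.lt_succ_iff.mp h1) with he | he
              · exact absurd (he ▸ h2) hnq
              · exact he
            rcases (H' m).mpr h2 with ⟨_, hd⟩ | ⟨he, _⟩ | ⟨hgt, _, _⟩
            · exact hd
            · omega
            · omega
          · rcases (H' (m+1)).mpr h2 with ⟨hlt, _⟩ | ⟨he, _⟩ | ⟨_, _, hd⟩
            · omega
            · omega
            · exact hd
  · rintro (⟨hqn, hD⟩ | ⟨hqn, hj, hnq, hD⟩)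
    · ext i
      rw [mem_descSet_ins]
      constructor
      · rintro (⟨_, hd⟩ | ⟨he, _, h1⟩ | ⟨hgt, h1, hd⟩)
        · rw [hD] at hd; exact hd
        · omega
        · have := hDb _ hd; omega
      · intro hi
        obtain ⟨i0, iln⟩ := hIb i hi
        exact Or.inl ⟨by omega, by rw [hD]; exact hi⟩
    · ext i
      rw [mem_descSet_ins]
      rcases hD with hD | ⟨hq0, hD⟩
      · constructor
        · rintro (⟨hlt, hd⟩ | ⟨he, _, _⟩ | ⟨hgt, h1, hd⟩)
          · rw [hD, mem_D2 I h0] at hd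
            rcases hd with ⟨_, hmem⟩ | ⟨hge, _⟩
            · exact hmem
            · omega
          · rw [he]; exact hj
          · rw [hD, mem_D2 I h0] at hd
            rcases hd with ⟨hlt', _⟩ | ⟨_, hmem⟩
            · omega
            · have hi : i - 1 + 1 = i := by omega
              rw [hi] at hmem; exact hmem
        · intro hi
          obtain ⟨i0, iln⟩ := hIb i hi
          rcases lt_trichotomy i q with hc | hc | hc
          · exact Or.inl ⟨hc, by rw [hD, mem_D2 I h0]; exact Or.inl ⟨by omega, hi⟩⟩
          · exact absurd (hc ▸ hi) hnq
          · rcases eq_or_lt_of_le (Nat.succ_le_of_lt hc) with he | he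
            · exact Or.inr (Or.inl ⟨he.symm, by omega, by omega⟩)
            · refine Or.inr (Or.inr ⟨he, by omega, ?_⟩)
              rw [hD, mem_D2 I h0]
              refine Or.inr ⟨by omega, ?_⟩
              have hi1 : i - 1 + 1 = i := by omega
              rw [hi1]; exact hi
      · constructor
        · rintro (⟨hlt, hd⟩ | ⟨he, _, _⟩ | ⟨hgt, h1, hd⟩)
          · rw [hD, Finset.mem_insert, mem_D2 I h0] at hd
            rcases hd with rfl | ⟨_, hmem⟩ | ⟨hge, _⟩
            · omega
            · exact hmem
            · omega
          · rw [he]; exact hj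
          · rw [hD, Finset.mem_insert, mem_D2 I h0] at hd
            rcases hd with he | ⟨hlt', _⟩ | ⟨_, hmem⟩
            · omega
            · omega
            · have hi : i - 1 + 1 = i := by omega
              rw [hi] at hmem; exact hmem
        · intro hi
          obtain ⟨i0, iln⟩ := hIb i hi
          rcases lt_trichotomy i q with hc | hc | hc
          · refine Or.inl ⟨hc, ?_⟩
            rw [hD, Finset.mem_insert, mem_D2 I h0]
            exact Or.inr (Or.inl ⟨by omega, hi⟩)
          · exact absurd (hc ▸ hi) hnq
          · rcases eq_or_lt_of_le (Nat.succ_le_of_lt hc) with he | he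
            · exact Or.inr (Or.inl ⟨he.symm, by omega, by omega⟩)
            · refine Or.inr (Or.inr ⟨he, by omega, ?_⟩)
              rw [hD, Finset.mem_insert, mem_D2 I h0]
              refine Or.inr (Or.inr ⟨by omega, ?_⟩)
              have hi1 : i - 1 + 1 = i := by omega
              rw [hi1]; exact hi

noncomputable def Gfun (I : Finset ℕ) (n : ℕ) (q : ℕ) : ℕ :=
  if q = n then dA I n
  else if q + 1 ∈ I ∧ q ∉ I then
    dA ((I.erase (q+1)).image (fun x => if x < q+1 then x else x - 1)) n
    + (if 0 < q then
        dA ((I.image fun x => if x < q+1 then x else x - 1).erase 0) n else 0)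
  else 0

lemma card_fiber_eval {n : ℕ} (I : Finset ℕ) (h0 : 0 ∉ I) (hn : I.sup id < n)
    (p : Fin (n+1)) :
    (Finset.univ.filter fun σ : Equiv.Perm (Fin n) =>
        descSet (n+1) (ins p σ) = I).card = Gfun I n p.val := by
  classical
  have key := fun σ : Equiv.Perm (Fin n) => des_ins_eq_iff I h0 hn p σ
  rw [Gfun]
  by_cases hpn : p.val = n
  · rw [if_pos hpn, dA]
    congr 1
    apply Finset.filter_congr
    intro σ _
    rw [key σ]
    constructor
    · rintro (⟨_, h⟩ | ⟨h, _⟩)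
      · exact h
      · omega
    · intro h
      exact Or.inl ⟨hpn, h⟩
  · rw [if_neg hpn]
    have hpn' : p.val < n := by have := p.isLt; omega
    by_cases hcond : p.val + 1 ∈ I ∧ p.val ∉ I
    · rw [if_pos hcond]
      by_cases hq0 : 0 < p.val
      · rw [if_pos hq0]
        have hsplit : (Finset.univ.filter fun σ : Equiv.Perm (Fin n) =>
            descSet (n+1) (ins p σ) = I)
            = (Finset.univ.filter fun σ : Equiv.Perm (Fin n) => descSet n σ =
                (I.erase (p.val+1)).image (fun x => if x < p.val+1 then x else x - 1))
              ∪ (Finset.univ.filter fun σ : Equiv.Perm (Fin n) => descSet n σ =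
                insert p.val ((I.erase (p.val+1)).image
                  (fun x => if x < p.val+1 then x else x - 1))) := by
          ext σ
          simp only [Finset.mem_union, Finset.mem_filter, Finset.mem_univ, true_and]
          rw [key σ]
          constructor
          · rintro (⟨h, _⟩ | ⟨_, _, _, (h | ⟨_, h⟩)⟩)
            · omega
            · exact Or.inl h
            · exact Or.inr h
          · rintro (h | h)
            · exact Or.inr ⟨hpn', hcond.1, hcond.2, Or.inl h⟩
            · exact Or.inr ⟨hpn', hcond.1, hcond.2, Or.inr ⟨hq0, h⟩⟩
        rw [hsplit, Finset.card_union_of_disjoint]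
        · have hins : insert p.val ((I.erase (p.val+1)).image
              (fun x => if x < p.val+1 then x else x - 1))
              = (I.image fun x => if x < p.val+1 then x else x - 1).erase 0 := by
            simpa using insert_D2 I h0 hcond.1 (j := p.val + 1) (by omega)
          rw [dA, dA, ← hins]
        · rw [Finset.disjoint_left]
          intro σ hσ1 hσ2
          simp only [Finset.mem_filter, Finset.mem_univ, true_and] at hσ1 hσ2
          have : p.val ∈ descSet n σ := by
            rw [hσ2]; exact Finset.mem_insert_self _ _
          rw [hσ1, mem_D2 I h0] at this
          rcases this with ⟨_, h⟩ | ⟨h, _⟩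
          · exact hcond.2 h
          · omega
      · rw [if_neg hq0, add_zero]
        have hsplit : (Finset.univ.filter fun σ : Equiv.Perm (Fin n) =>
            descSet (n+1) (ins p σ) = I)
            = (Finset.univ.filter fun σ : Equiv.Perm (Fin n) => descSet n σ =
                (I.erase (p.val+1)).image (fun x => if x < p.val+1 then x else x - 1)) := by
          ext σ
          simp only [Finset.mem_filter, Finset.mem_univ, true_and]
          rw [key σ]
          constructor
          · rintro (⟨h, _⟩ | ⟨_, _, _, (h | ⟨h', _⟩)⟩)
            · omega
            · exact h
            · omega
          · intro h
            exact Or.inr ⟨hpn', hcond.1, hcond.2, Or.inl h⟩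
        rw [hsplit, dA]
    · rw [if_neg hcond]
      rw [Finset.card_eq_zero, Finset.filter_eq_empty_iff]
      intro σ _
      rw [key σ]
      rintro (⟨h, _⟩ | ⟨_, h1, h2, _⟩)
      · omega
      · exact hcond ⟨h1, h2⟩

/-- Theorem 2.4: the positive recursion
`d(I;n+1) = d(I;n) + Σ_{i_k ∈ I''} d(I_k;n) + Σ_{i_k ∈ I'} d(Î_k;n)`, where
`I_k` keeps elements `< i_k`, decrements the rest and discards `0`;
`Î_k` removes `i_k` and decrements the elements `> i_k`;
`I' = {i_k ∈ I : i_k − 1 ∉ I}` and `I'' = I' \ {1}`. -/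
theorem stmt_3 (I : Finset ℕ) (h0 : 0 ∉ I) (hne : I.Nonempty)
    (n : ℕ) (hn : I.sup id < n) :
    dA I (n + 1) =
      dA I n
      + ∑ j ∈ ((I.filter fun j => j - 1 ∉ I).erase 1),
          dA ((I.image fun x => if x < j then x else x - 1).erase 0) n
      + ∑ j ∈ (I.filter fun j => j - 1 ∉ I),
          dA ((I.erase j).image fun x => if x < j then x else x - 1) n := by
  classical
  have hmemn : ∀ j ∈ I, 0 < j ∧ j < n := fun j hj =>
    ⟨Nat.pos_of_ne_zero (fun h => h0 (h ▸ hj)),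
     lt_of_le_of_lt (Finset.le_sup (f := id) hj) hn⟩
  have h1 : dA I (n+1) = ∑ p : Fin (n+1), Gfun I n p.val := by
    rw [dA, Finset.card_eq_sum_card_fiberwise
      (f := fun π : Equiv.Perm (Fin (n+1)) => π.symm (Fin.last n))
      (t := Finset.univ) (fun x _ => Finset.mem_univ _)]
    exact Finset.sum_congr rfl fun p _ => (fiber_card I p).trans (card_fiber_eval I h0 hn p)
  rw [h1, Fin.sum_univ_eq_sum_range (fun q => Gfun I n q) (n+1), Finset.sum_range_succ]
  have hGn : Gfun I n n = dA I n := by rw [Gfun, if_pos rfl]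
  have h2 : ∑ q ∈ Finset.range n, Gfun I n q
      = ∑ j ∈ I.filter (fun j => j - 1 ∉ I),
          (dA ((I.erase j).image (fun x => if x < j then x else x - 1)) n
           + if 1 < j then dA ((I.image fun x => if x < j then x else x - 1).erase 0) n
             else 0) := by
    have hside : ∀ q ∈ Finset.range n, Gfun I n q ≠ 0 → (q + 1 ∈ I ∧ q ∉ I) := by
      intro q hq hnz
      rw [Finset.mem_range] at hq
      rw [Gfun, if_neg (by omega)] at hnz
      by_contra hc
      rw [if_neg hc] at hnz
      exact hnz rfl
    rw [← Finset.sum_filter_of_ne hside]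
    refine Finset.sum_nbij' (i := fun q => q + 1) (j := fun j => j - 1) ?_ ?_ ?_ ?_ ?_
    · intro q hq
      simp only [Finset.mem_filter, Finset.mem_range] at hq ⊢
      exact ⟨hq.2.1, by simpa using hq.2.2⟩
    · intro j hj
      simp only [Finset.mem_filter, Finset.mem_range] at hj ⊢
      obtain ⟨hj0, hjn⟩ := hmemn j hj.1
      have hje : j - 1 + 1 = j := by omega
      exact ⟨by omega, by rw [hje]; exact hj.1, hj.2⟩
    · intro q hq; beta_reduce; omega
    · intro j hj
      simp only [Finset.mem_filter] at hj
      have := (hmemn j hj.1).1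
      beta_reduce; omega
    · intro q hq
      simp only [Finset.mem_filter, Finset.mem_range] at hq
      beta_reduce
      rw [Gfun, if_neg (by omega), if_pos hq.2]
      congr 1
      rcases Nat.eq_zero_or_pos q with rfl | hq0
      · rw [if_neg (by omega), if_neg (by omega)]
      · rw [if_pos hq0, if_pos (by omega)]
  rw [h2, hGn, Finset.sum_add_distrib, ← Finset.sum_filter]
  have hferase : (I.filter fun j => j - 1 ∉ I).filter (fun j => 1 < j)
      = (I.filter fun j => j - 1 ∉ I).erase 1 := by
    ext j
    simp only [Finset.mem_filter, Finset.mem_erase]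
    constructor
    · rintro ⟨⟨hj, hj2⟩, hj1⟩
      exact ⟨by omega, hj, hj2⟩
    · rintro ⟨hj1, hj, hj2⟩
      have := (hmemn j hj).1
      exact ⟨⟨hj, hj2⟩, by omega⟩
  rw [hferase]
  ring
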